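/- Fundamental theorem of entailment relations. Let S be a set and ⊢ an entailment relation on S, i.e. a relation between finite subsets of S satisfying: (reflexivity) {a} ⊢ {a} for all a ∈ S; (monotonicity) if A ⊢ B then A ∪ A' ⊢ B ∪ B'; (cut) if A ∪ {x} ⊢ B and A ⊢ B ∪ {x} then A ⊢ B. Then there exists a bounded distributive lattice T and a map f : S → T such that for all finite subsets A, B of S: the infimum of f over A is ≤ the supremum of f over B in T if and only if A ⊢ B (where the infimum over the empty set is 1 and the supremum over the empty set is 0). -/

import Mathlib

namespace Stmt13

variable {S : Type} [DecidableEq S]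

/-- `A` is a transversal of `X`: it meets every member of `X`. -/
def Tr (X : Finset (Finset S)) (A : Finset S) : Prop := ∀ B ∈ X, (A ∩ B).Nonempty

/-- Order on DNF representatives: `⋁⋀X ≤ ⋀⋁Y`-style comparison. -/
def Le (E : Finset S → Finset S → Prop) (X Y : Finset (Finset S)) : Prop :=
  ∀ C ∈ Y, ∀ A : Finset S, Tr X A → E A C

/-- Join of representatives. -/
def Jn (X Y : Finset (Finset S)) : Finset (Finset S) :=
  (X ×ˢ Y).image fun p => p.1 ∪ p.2

section Basic

variable {E : Finset S → Finset S → Prop}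

lemma monoL (hmono : ∀ A B A' B' : Finset S, E A B → E (A ∪ A') (B ∪ B'))
    {A B A' : Finset S} (h : E A B) (hs : A ⊆ A') : E A' B := by
  have := hmono A B A' ∅ h
  rwa [Finset.union_eq_right.mpr hs, Finset.union_empty] at this

lemma monoR (hmono : ∀ A B A' B' : Finset S, E A B → E (A ∪ A') (B ∪ B'))
    {A B B' : Finset S} (h : E A B) (hs : B ⊆ B') : E A B' := by
  have := hmono A B ∅ B' h
  rwa [Finset.union_empty, Finset.union_eq_right.mpr hs] at this

lemma elem_ent (hrefl : ∀ a : S, E {a} {a})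
    (hmono : ∀ A B A' B' : Finset S, E A B → E (A ∪ A') (B ∪ B'))
    {A B : Finset S} {a : S} (ha : a ∈ A) (hb : a ∈ B) : E A B :=
  monoR hmono (monoL hmono (hrefl a) (Finset.singleton_subset_iff.mpr ha))
    (Finset.singleton_subset_iff.mpr hb)

lemma multicut (hmono : ∀ A B A' B' : Finset S, E A B → E (A ∪ A') (B ∪ B'))
    (hcut : ∀ (A B : Finset S) (x : S), E (insert x A) B → E A (insert x B) → E A B) :
    ∀ (D A B : Finset S), E A (B ∪ D) → (∀ d ∈ D, E (insert d A) B) → E A B := by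
  intro D
  induction D using Finset.induction_on with
  | empty => intro A B h _; simpa using h
  | @insert d D' hd ih =>
    intro A B h hall
    have h1 : E A (insert d (B ∪ D')) := by rwa [Finset.union_insert] at h
    have h2 : E (insert d A) (B ∪ D') :=
      monoR hmono (hall d (Finset.mem_insert_self _ _)) Finset.subset_union_left
    have h3 : E A (B ∪ D') := hcut A (B ∪ D') d h2 h1
    exact ih A B h3 fun x hx => hall x (Finset.mem_insert_of_mem hx)

lemma cutFam (hmono : ∀ A B A' B' : Finset S, E A B → E (A ∪ A') (B ∪ B'))
    (hcut : ∀ (A B : Finset S) (x : S), E (insert x A) B → E A (insert x B) → E A B) :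
    ∀ (Y : Finset (Finset S)) (A C : Finset S),
      (∀ D ∈ Y, E A D) →
      (∀ A' : Finset S, (∀ D ∈ Y, (A' ∩ D).Nonempty) → E (A ∪ A') C) → E A C := by
  intro Y
  induction Y using Finset.induction_on with
  | empty =>
    intro A C _ h
    simpa using h ∅ (by simp)
  | @insert D Y' hD ih =>
    intro A C h1 h2
    have hAD : E A D := h1 D (Finset.mem_insert_self _ _)
    have hkey : ∀ d ∈ D, E (insert d A) C := by
      intro d hd
      refine ih (insert d A) C
        (fun B hB => monoL hmono (h1 B (Finset.mem_insert_of_mem hB)) (Finset.subset_insert _ _))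
        (fun A' hA' => ?_)
      have hm : ∀ B ∈ insert D Y', ((insert d A') ∩ B).Nonempty := by
        intro B hB
        rcases Finset.mem_insert.mp hB with rfl | hB'
        · exact ⟨d, Finset.mem_inter.mpr ⟨Finset.mem_insert_self _ _, hd⟩⟩
        · obtain ⟨a, ha⟩ := hA' B hB'
          exact ⟨a, Finset.mem_inter.mpr
            ⟨Finset.mem_insert_of_mem (Finset.mem_inter.mp ha).1, (Finset.mem_inter.mp ha).2⟩⟩
      have := h2 (insert d A') hm
      have heq : insert d A ∪ A' = A ∪ insert d A' := by
        ext x; simp [or_left_comm, or_comm, or_assoc]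
      rwa [heq]
    exact multicut hmono hcut D A C (monoR hmono hAD Finset.subset_union_right) hkey

variable (E)

lemma Le_refl (hrefl : ∀ a : S, E {a} {a})
    (hmono : ∀ A B A' B' : Finset S, E A B → E (A ∪ A') (B ∪ B'))
    (X : Finset (Finset S)) : Le E X X := by
  intro C hC A hA
  obtain ⟨a, ha⟩ := hA C hC
  exact elem_ent hrefl hmono (Finset.mem_inter.mp ha).1 (Finset.mem_inter.mp ha).2

lemma Le_trans (hmono : ∀ A B A' B' : Finset S, E A B → E (A ∪ A') (B ∪ B'))
    (hcut : ∀ (A B : Finset S) (x : S), E (insert x A) B → E A (insert x B) → E A B)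
    {X Y Z : Finset (Finset S)} (h1 : Le E X Y) (h2 : Le E Y Z) : Le E X Z := by
  intro C hC A hA
  exact cutFam hmono hcut Y A C (fun D hD => h1 D hD A hA)
    (fun A' hA' => monoL hmono (h2 C hC A' hA') Finset.subset_union_right)

lemma Le_inf_le_left (hrefl : ∀ a : S, E {a} {a})
    (hmono : ∀ A B A' B' : Finset S, E A B → E (A ∪ A') (B ∪ B'))
    (X Y : Finset (Finset S)) : Le E (X ∪ Y) X := by
  intro C hC A hA
  obtain ⟨a, ha⟩ := hA C (Finset.mem_union_left _ hC)
  exact elem_ent hrefl hmono (Finset.mem_inter.mp ha).1 (Finset.mem_inter.mp ha).2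

lemma Le_inf_le_right (hrefl : ∀ a : S, E {a} {a})
    (hmono : ∀ A B A' B' : Finset S, E A B → E (A ∪ A') (B ∪ B'))
    (X Y : Finset (Finset S)) : Le E (X ∪ Y) Y := by
  intro C hC A hA
  obtain ⟨a, ha⟩ := hA C (Finset.mem_union_right _ hC)
  exact elem_ent hrefl hmono (Finset.mem_inter.mp ha).1 (Finset.mem_inter.mp ha).2

lemma Le_le_inf {X Y Z : Finset (Finset S)} (h1 : Le E Z X) (h2 : Le E Z Y) :
    Le E Z (X ∪ Y) := by
  intro C hC A hA
  rcases Finset.mem_union.mp hC with h | h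
  · exact h1 C h A hA
  · exact h2 C h A hA

lemma Le_le_sup_left (hrefl : ∀ a : S, E {a} {a})
    (hmono : ∀ A B A' B' : Finset S, E A B → E (A ∪ A') (B ∪ B'))
    (X Y : Finset (Finset S)) : Le E X (Jn X Y) := by
  intro C hC A hA
  obtain ⟨⟨B, B'⟩, hmem, rfl⟩ := Finset.mem_image.mp hC
  obtain ⟨a, ha⟩ := hA B (Finset.mem_product.mp hmem).1
  exact elem_ent hrefl hmono (Finset.mem_inter.mp ha).1
    (Finset.mem_union_left _ (Finset.mem_inter.mp ha).2)

lemma Le_le_sup_right (hrefl : ∀ a : S, E {a} {a})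
    (hmono : ∀ A B A' B' : Finset S, E A B → E (A ∪ A') (B ∪ B'))
    (X Y : Finset (Finset S)) : Le E Y (Jn X Y) := by
  intro C hC A hA
  obtain ⟨⟨B, B'⟩, hmem, rfl⟩ := Finset.mem_image.mp hC
  obtain ⟨a, ha⟩ := hA B' (Finset.mem_product.mp hmem).2
  exact elem_ent hrefl hmono (Finset.mem_inter.mp ha).1
    (Finset.mem_union_right _ (Finset.mem_inter.mp ha).2)

lemma Le_sup_le {X Y Z : Finset (Finset S)} (h1 : Le E X Z) (h2 : Le E Y Z) :
    Le E (Jn X Y) Z := by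
  intro C hC A hA
  by_cases h : ∀ B ∈ X, (A ∩ B).Nonempty
  · exact h1 C hC A h
  · push_neg at h
    obtain ⟨B₀, hB₀, hB₀e⟩ := h
    refine h2 C hC A fun B' hB' => ?_
    have := hA (B₀ ∪ B') (Finset.mem_image.mpr ⟨(B₀, B'), Finset.mem_product.mpr ⟨hB₀, hB'⟩, rfl⟩)
    rw [Finset.inter_union_distrib_left, hB₀e,
      Finset.empty_union] at this
    exact this

lemma Le_distrib (hrefl : ∀ a : S, E {a} {a})
    (hmono : ∀ A B A' B' : Finset S, E A B → E (A ∪ A') (B ∪ B'))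
    (X Y Z : Finset (Finset S)) : Le E (Jn X Y ∪ Jn X Z) (Jn X (Y ∪ Z)) := by
  intro C hC A hA
  obtain ⟨⟨B₁, B₂⟩, hmem, rfl⟩ := Finset.mem_image.mp hC
  obtain ⟨hB₁, hB₂⟩ := Finset.mem_product.mp hmem
  rcases Finset.mem_union.mp hB₂ with h | h
  · obtain ⟨a, ha⟩ := hA (B₁ ∪ B₂) (Finset.mem_union_left _
      (Finset.mem_image.mpr ⟨(B₁, B₂), Finset.mem_product.mpr ⟨hB₁, h⟩, rfl⟩))
    exact elem_ent hrefl hmono (Finset.mem_inter.mp ha).1 (Finset.mem_inter.mp ha).2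
  · obtain ⟨a, ha⟩ := hA (B₁ ∪ B₂) (Finset.mem_union_right _
      (Finset.mem_image.mpr ⟨(B₁, B₂), Finset.mem_product.mpr ⟨hB₁, h⟩, rfl⟩))
    exact elem_ent hrefl hmono (Finset.mem_inter.mp ha).1 (Finset.mem_inter.mp ha).2

lemma Le_bot (X : Finset (Finset S)) : Le E {∅} X := by
  intro C hC A hA
  obtain ⟨a, ha⟩ := hA ∅ (Finset.mem_singleton_self _)
  simp at ha

lemma Le_top (X : Finset (Finset S)) : Le E X ∅ := by
  intro C hC
  exact absurd hC (Finset.notMem_empty _)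

end Basic

end Stmt13

open Stmt13 in
theorem stmt_13 {S : Type} [DecidableEq S] (E : Finset S → Finset S → Prop)
    (hrefl : ∀ a : S, E {a} {a})
    (hmono : ∀ A B A' B' : Finset S, E A B → E (A ∪ A') (B ∪ B'))
    (hcut : ∀ (A B : Finset S) (x : S), E (insert x A) B → E A (insert x B) → E A B) :
    ∃ (T : Type) (_ : DistribLattice T) (_ : BoundedOrder T) (f : S → T),
      ∀ A B : Finset S, A.inf f ≤ B.sup f ↔ E A B := by
  classical
  set lrefl := Le_refl E hrefl hmono with hlrefl
  have ltrans : ∀ {X Y Z}, Le E X Y → Le E Y Z → Le E X Z :=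
    fun h1 h2 => Le_trans E hmono hcut h1 h2
  -- setoid
  let s : Setoid (Finset (Finset S)) :=
    ⟨fun X Y => Le E X Y ∧ Le E Y X,
      fun X => ⟨lrefl X, lrefl X⟩,
      fun h => ⟨h.2, h.1⟩,
      fun h1 h2 => ⟨ltrans h1.1 h2.1, ltrans h2.2 h1.2⟩⟩
  let T := Quotient s
  -- operations
  let le : T → T → Prop := Quotient.lift₂ (Le E) (by
    intro a b a' b' ha hb
    exact propext ⟨fun h => ltrans ha.2 (ltrans h hb.1), fun h => ltrans ha.1 (ltrans h hb.2)⟩)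
  let inf : T → T → T := Quotient.map₂ (· ∪ ·) (by
    intro a a' ha b b' hb
    exact ⟨Le_le_inf E (ltrans (Le_inf_le_left E hrefl hmono a b) ha.1)
            (ltrans (Le_inf_le_right E hrefl hmono a b) hb.1),
          Le_le_inf E (ltrans (Le_inf_le_left E hrefl hmono a' b') ha.2)
            (ltrans (Le_inf_le_right E hrefl hmono a' b') hb.2)⟩)
  let sup : T → T → T := Quotient.map₂ Jn (by
    intro a a' ha b b' hb
    exact ⟨Le_sup_le E (ltrans ha.1 (Le_le_sup_left E hrefl hmono a' b'))
            (ltrans hb.1 (Le_le_sup_right E hrefl hmono a' b')),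
          Le_sup_le E (ltrans ha.2 (Le_le_sup_left E hrefl hmono a b))
            (ltrans hb.2 (Le_le_sup_right E hrefl hmono a b))⟩)
  let dl : DistribLattice T :=
    { le := le
      lt := fun a b => le a b ∧ ¬ le b a
      lt_iff_le_not_ge := fun _ _ => Iff.rfl
      sup := sup
      inf := inf
      le_refl := fun x => Quotient.inductionOn x fun a => lrefl a
      le_trans := fun x y z => Quotient.inductionOn₃ x y z fun a b c h1 h2 => ltrans h1 h2
      le_antisymm := fun x y => Quotient.inductionOn₂ x y fun a b h1 h2 =>
        Quotient.sound ⟨h1, h2⟩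
      le_sup_left := fun x y => Quotient.inductionOn₂ x y fun a b =>
        Le_le_sup_left E hrefl hmono a b
      le_sup_right := fun x y => Quotient.inductionOn₂ x y fun a b =>
        Le_le_sup_right E hrefl hmono a b
      sup_le := fun x y z => Quotient.inductionOn₃ x y z fun a b c h1 h2 =>
        Le_sup_le E h1 h2
      inf_le_left := fun x y => Quotient.inductionOn₂ x y fun a b =>
        Le_inf_le_left E hrefl hmono a b
      inf_le_right := fun x y => Quotient.inductionOn₂ x y fun a b =>
        Le_inf_le_right E hrefl hmono a b
      le_inf := fun x y z => Quotient.inductionOn₃ x y z fun a b c h1 h2 =>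
        Le_le_inf E h1 h2
      le_sup_inf := fun x y z => Quotient.inductionOn₃ x y z fun a b c =>
        Le_distrib E hrefl hmono a b c }
  let bo : @BoundedOrder T dl.toSemilatticeInf.toLE :=
    @BoundedOrder.mk T dl.toSemilatticeInf.toLE
      (@OrderTop.mk T dl.toSemilatticeInf.toLE ⟨Quotient.mk s ∅⟩
        fun x => Quotient.inductionOn x fun a => Le_top E a)
      (@OrderBot.mk T dl.toSemilatticeInf.toLE ⟨Quotient.mk s {∅}⟩
        fun x => Quotient.inductionOn x fun a => Le_bot E a)
  refine ⟨T, dl, bo, fun a => Quotient.mk s {{a}}, ?_⟩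
  have hinf : ∀ A : Finset S,
      (A.inf (fun a => Quotient.mk s {{a}}) : T) = Quotient.mk s (A.image fun a => ({a} : Finset S)) := by
    intro A
    induction A using Finset.induction_on with
    | empty => simp [Finset.inf_empty]; rfl
    | @insert a A' ha ih =>
      rw [Finset.inf_insert, ih, Finset.image_insert]
      show inf _ _ = _
      simp only [inf, Quotient.map₂_mk]
      congr 1
  have hsup : ∀ B : Finset S,
      (B.sup (fun a => Quotient.mk s {{a}}) : T) = Quotient.mk s ({B} : Finset (Finset S)) := by
    intro B
    induction B using Finset.induction_on with
    | empty => simp [Finset.sup_empty]; rfl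
    | @insert b B' hb ih =>
      rw [Finset.sup_insert, ih]
      show sup _ _ = _
      simp only [sup, Quotient.map₂_mk]
      congr 1
  intro A B
  rw [hinf A, hsup B]
  show Le E (A.image fun a => ({a} : Finset S)) {B} ↔ E A B
  constructor
  · intro h
    refine h B (Finset.mem_singleton_self _) A ?_
    intro C hC
    obtain ⟨a, ha, rfl⟩ := Finset.mem_image.mp hC
    exact ⟨a, Finset.mem_inter.mpr ⟨ha, Finset.mem_singleton_self _⟩⟩
  · intro h C hC A' hA'
    rw [Finset.mem_singleton] at hC; subst hC
    refine monoL hmono h fun a ha => ?_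
    obtain ⟨x, hx⟩ := hA' {a} (Finset.mem_image_of_mem _ ha)
    obtain ⟨hx1, hx2⟩ := Finset.mem_inter.mp hx
    rwa [Finset.mem_singleton.mp hx2] at hx1
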